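/- Let G be the graph obtained by taking a triangle K₃ with vertices u₁, u₂, v₁ and joining v₁ to a complete bipartite graph K_{k,k} by a path v₁, v₂, ..., v_{n−2k−1} whose endpoint v_{n−2k−1} lies in K_{k,k} (with k ≥ 3). If x is a unit Perron eigenvector of G with eigenvalue μ = μ(G), then the entries x_{u₁} = x_{u₂} satisfy x_{u₁} = x_{v₁}/(μ−1), and x_{v_i} < (μ−1)·x_{v_{i+1}} for all 1 ≤ i ≤ n−2k−2. -/

import Mathlib

open Classical in
noncomputable def adjMat {V : Type*} [Fintype V] (G : SimpleGraph V) :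
    Matrix V V ℝ :=
  Matrix.of fun i j => if G.Adj i j then 1 else 0

def IsAdjEigenvalue {V : Type*} [Fintype V] (A : Matrix V V ℝ) (μ : ℝ) : Prop :=
  ∃ x : V → ℝ, x ≠ 0 ∧ A.mulVec x = μ • x

def IsMaxAdjEigenvalue {V : Type*} [Fintype V] (A : Matrix V V ℝ) (μ : ℝ) : Prop :=
  IsAdjEigenvalue A μ ∧ ∀ ν, IsAdjEigenvalue A ν → ν ≤ μ

def IsMinAdjEigenvalue {V : Type*} [Fintype V] (A : Matrix V V ℝ) (μ : ℝ) : Prop :=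
  IsAdjEigenvalue A μ ∧ ∀ ν, IsAdjEigenvalue A ν → μ ≤ ν

/-- Auxiliary edge relation (on indices) for the graph made of a triangle on indices
`0, 1, 2` (with `v₁` at index `2`), a path `v₁, …, v_p` (`p = n - 2k - 1`, `v_i` at
index `i + 1`), and a complete bipartite graph `K_{k,k}` with parts
`{n - 2k} ∪ [n - 2k + 1, n - k - 1]` (the part containing `v_p`, which sits at index
`n - 2k`) and `[n - k, n - 1]`. -/
def triPathRel (n k : ℕ) (x y : ℕ) : Prop :=
  (x < 3 ∧ y < 3)
  ∨ (2 ≤ x ∧ x ≤ n - 2 * k - 1 ∧ y = x + 1)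
  ∨ ((x = n - 2 * k ∨ (n - 2 * k + 1 ≤ x ∧ x ≤ n - k - 1)) ∧ n - k ≤ y)

/-- The graph `G` of order `n`: a triangle `u₁ u₂ v₁` joined to `K_{k,k}`
by the path `v₁, …, v_{n-2k-1}` whose last vertex lies in `K_{k,k}`. -/
def triPathKkk (n k : ℕ) : SimpleGraph (Fin n) where
  Adj a b := a ≠ b ∧ (triPathRel n k a.1 b.1 ∨ triPathRel n k b.1 a.1)
  symm := by
    constructor
    intro a b h
    exact ⟨h.1.symm, h.2.symm⟩
  loopless := by
    constructor
    intro a h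
    exact h.1 rfl

open Classical

lemma adj_iff (n k : ℕ) (a b : Fin n) :
    (triPathKkk n k).Adj a b ↔ (a ≠ b ∧ (triPathRel n k a.1 b.1 ∨ triPathRel n k b.1 a.1)) :=
  Iff.rfl

lemma mulVec_eq_sum {n k : ℕ} (x : Fin n → ℝ) (i : Fin n) :
    (adjMat (triPathKkk n k)).mulVec x i
      = ∑ j, (if (triPathKkk n k).Adj i j then x j else 0) := by
  simp [adjMat, Matrix.mulVec, dotProduct, ite_mul]

lemma sum_row {n k : ℕ} (x : Fin n → ℝ) (i : Fin n) (s : Finset (Fin n))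
    (h : ∀ j, (triPathKkk n k).Adj i j ↔ j ∈ s) :
    (adjMat (triPathKkk n k)).mulVec x i = ∑ j ∈ s, x j := by
  rw [mulVec_eq_sum]
  rw [Finset.sum_congr rfl (fun j _ => if_congr (h j) rfl rfl)]
  simp [Finset.sum_ite_mem]

lemma row_two {n k : ℕ} (x : Fin n → ℝ) (i u w : Fin n) (hne : u ≠ w)
    (h : ∀ j, (triPathKkk n k).Adj i j ↔ (j = u ∨ j = w)) :
    (adjMat (triPathKkk n k)).mulVec x i = x u + x w := by
  rw [sum_row x i {u, w} (fun j => by simp [h j])]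
  rw [Finset.sum_pair hne]

lemma row_three {n k : ℕ} (x : Fin n → ℝ) (i u v w : Fin n)
    (h1 : u ≠ v) (h2 : u ≠ w) (h3 : v ≠ w)
    (h : ∀ j, (triPathKkk n k).Adj i j ↔ (j = u ∨ j = v ∨ j = w)) :
    (adjMat (triPathKkk n k)).mulVec x i = x u + x v + x w := by
  rw [sum_row x i {u, v, w} (fun j => by simp [h j])]
  rw [Finset.sum_insert (by simp [h1, h2]), Finset.sum_pair h3, add_assoc]

lemma sum_row_ge {n k : ℕ} (x : Fin n → ℝ) (hx : ∀ i, 0 ≤ x i) (i : Fin n)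
    (s : Finset (Fin n)) (h : ∀ j ∈ s, (triPathKkk n k).Adj i j) :
    ∑ j ∈ s, x j ≤ (adjMat (triPathKkk n k)).mulVec x i := by
  rw [mulVec_eq_sum]
  rw [show (∑ j ∈ s, x j) = ∑ j, (if j ∈ s then x j else 0) by simp [Finset.sum_ite_mem]]
  apply Finset.sum_le_sum
  intro j _
  by_cases hj : j ∈ s
  · simp [hj, h j hj]
  · simp only [hj, if_neg, if_false]
    split <;> simp [hx j]

set_option maxHeartbeats 1000000 in
theorem stmt14 (n k : ℕ) (hk : 3 ≤ k) (hn : 2 * k + 2 ≤ n)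
    (μ : ℝ) (x : Fin n → ℝ) (hxpos : ∀ i, 0 < x i) (hunit : ∑ i, x i ^ 2 = 1)
    (hmax : IsMaxAdjEigenvalue (adjMat (triPathKkk n k)) μ)
    (heig : (adjMat (triPathKkk n k)).mulVec x = μ • x) :
    x ⟨0, by omega⟩ = x ⟨1, by omega⟩ ∧
    x ⟨0, by omega⟩ = x ⟨2, by omega⟩ / (μ - 1) ∧
    ∀ (i : ℕ) (_hi1 : 1 ≤ i) (_hi2 : i ≤ n - 2 * k - 2),
      x ⟨i + 1, by omega⟩ < (μ - 1) * x ⟨i + 2, by omega⟩ := by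
  have he : ∀ i, (adjMat (triPathKkk n k)).mulVec x i = μ * x i := by
    intro i; rw [heig]; simp
  -- row at 0
  have h0 : μ * x ⟨0, by omega⟩ = x ⟨1, by omega⟩ + x ⟨2, by omega⟩ := by
    rw [← he]
    exact row_two x _ _ _ (by simp [Fin.ext_iff]) (by
      rintro ⟨j, hj⟩
      simp only [adj_iff, triPathRel, Fin.ext_iff, ne_eq]
      omega)
  have h1 : μ * x ⟨1, by omega⟩ = x ⟨0, by omega⟩ + x ⟨2, by omega⟩ := by
    rw [← he]
    exact row_two x _ _ _ (by simp [Fin.ext_iff]) (by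
      rintro ⟨j, hj⟩
      simp only [adj_iff, triPathRel, Fin.ext_iff, ne_eq]
      omega)
  -- μ ≥ k
  have hμpos : 0 < μ := by nlinarith [hxpos ⟨0, by omega⟩, hxpos ⟨1, by omega⟩, hxpos ⟨2, by omega⟩]
  set SA : Finset (Fin n) := Finset.univ.filter
      (fun j : Fin n => j.1 = n - 2*k ∨ (n - 2*k + 1 ≤ j.1 ∧ j.1 ≤ n - k - 1)) with hSA
  set SB : Finset (Fin n) := Finset.univ.filter (fun j : Fin n => n - k ≤ j.1) with hSB
  have hSAcard : SA.card = k := by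
    apply Finset.card_eq_of_bijective (fun i hi => (⟨n - 2*k + i, by omega⟩ : Fin n))
    · rintro ⟨a, ha⟩ haS
      simp only [hSA, Finset.mem_filter, Finset.mem_univ, true_and] at haS
      exact ⟨a - (n - 2*k), by omega, by simp [Fin.ext_iff]; omega⟩
    · intro i hi
      simp only [hSA, Finset.mem_filter, Finset.mem_univ, true_and]
      omega
    · intro i j hi hj hij
      simp only [Fin.ext_iff] at hij
      omega
  have hSBcard : SB.card = k := by
    apply Finset.card_eq_of_bijective (fun i hi => (⟨n - k + i, by omega⟩ : Fin n))
    · rintro ⟨a, ha⟩ haS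
      simp only [hSB, Finset.mem_filter, Finset.mem_univ, true_and] at haS
      exact ⟨a - (n - k), by omega, by simp [Fin.ext_iff]; omega⟩
    · intro i hi
      simp only [hSB, Finset.mem_filter, Finset.mem_univ, true_and]
      omega
    · intro i j hi hj hij
      simp only [Fin.ext_iff] at hij
      omega
  obtain ⟨a0, ha0S, ha0min⟩ := SA.exists_min_image x (by
    rw [← Finset.card_pos, hSAcard]; omega)
  obtain ⟨b0, hb0S, hb0min⟩ := SB.exists_min_image x (by
    rw [← Finset.card_pos, hSBcard]; omega)
  have hadjAB : ∀ a ∈ SA, ∀ b ∈ SB, (triPathKkk n k).Adj a b := by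
    rintro ⟨a, haa⟩ haS ⟨b, hbb⟩ hbS
    simp only [hSA, hSB, Finset.mem_filter, Finset.mem_univ, true_and] at haS hbS
    simp only [adj_iff, triPathRel, Fin.ext_iff, ne_eq]
    omega
  have hrowB : μ * x b0 = ∑ j ∈ SA, x j := by
    rw [← he]
    apply sum_row
    rintro ⟨j, hj⟩
    obtain ⟨b, hbb⟩ := b0
    simp only [hSB, Finset.mem_filter, Finset.mem_univ, true_and] at hb0S
    simp only [adj_iff, triPathRel, Fin.ext_iff, ne_eq, hSA, Finset.mem_filter,
      Finset.mem_univ, true_and]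
    omega
  have hgeA : ∑ j ∈ SB, x j ≤ μ * x a0 := by
    rw [← he]
    exact sum_row_ge x (fun i => (hxpos i).le) _ _ (fun b hb => hadjAB a0 ha0S b hb)
  have hk1 : (k : ℝ) * x a0 ≤ ∑ j ∈ SA, x j := by
    have := Finset.card_nsmul_le_sum SA x (x a0) ha0min
    rwa [hSAcard, nsmul_eq_mul] at this
  have hk2 : (k : ℝ) * x b0 ≤ ∑ j ∈ SB, x j := by
    have := Finset.card_nsmul_le_sum SB x (x b0) hb0min
    rwa [hSBcard, nsmul_eq_mul] at this
  have hμk : (k : ℝ) ≤ μ := by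
    by_contra hlt
    push_neg at hlt
    nlinarith [hxpos a0, hxpos b0, mul_pos (sub_pos.2 hlt) (add_pos (hxpos a0) (hxpos b0))]
  have hμ3 : (3 : ℝ) ≤ μ := le_trans (by exact_mod_cast hk) hμk
  -- x0 = x1
  have hx01 : x ⟨0, by omega⟩ = x ⟨1, by omega⟩ := by
    have hzero : (μ + 1) * (x ⟨0, by omega⟩ - x ⟨1, by omega⟩) = 0 := by
      linear_combination h0 - h1
    have : x ⟨0, by omega⟩ - x ⟨1, by omega⟩ = 0 := by
      rcases mul_eq_zero.1 hzero with h | h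
      · linarith
      · exact h
    linarith
  have hx02 : (μ - 1) * x ⟨0, by omega⟩ = x ⟨2, by omega⟩ := by
    rw [hx01] at h0 ⊢
    linarith [h0, hx01]
  refine ⟨hx01, ?_, ?_⟩
  · rw [eq_div_iff (by linarith : μ - 1 ≠ 0)]
    linarith [hx02]
  · -- induction
    intro i hi1
    induction i, hi1 using Nat.le_induction with
    | base =>
      intro h2
      -- n ≥ 2k+3 here
      have hn3 : 2 * k + 3 ≤ n := by omega
      have h2row : μ * x ⟨2, by omega⟩
          = x ⟨0, by omega⟩ + x ⟨1, by omega⟩ + x ⟨3, by omega⟩ := by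
        rw [← he]
        exact row_three x _ _ _ _ (by simp [Fin.ext_iff]) (by simp [Fin.ext_iff])
          (by simp [Fin.ext_iff]) (by
          rintro ⟨j, hj⟩
          simp only [adj_iff, triPathRel, Fin.ext_iff, ne_eq]
          omega)
      have hpos2 := hxpos ⟨2, by omega⟩
      have hpos3 := hxpos ⟨3, by omega⟩
      have hkey : (0:ℝ) < μ^2 - μ - 3 := by nlinarith
      nlinarith [mul_pos hkey hpos2]
    | succ i hi ih =>
      intro h2
      have ihh := ih (by omega)
      have hrow : μ * x ⟨i + 2, by omega⟩
          = x ⟨i + 1, by omega⟩ + x ⟨i + 3, by omega⟩ := by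
        rw [← he]
        exact row_two x _ _ _ (by simp [Fin.ext_iff]) (by
          rintro ⟨j, hj⟩
          simp only [adj_iff, triPathRel, Fin.ext_iff, ne_eq]
          omega)
      have hp1 := hxpos ⟨i + 1, by omega⟩
      have hp2 := hxpos ⟨i + 2, by omega⟩
      have hp3 := hxpos ⟨i + 3, by omega⟩
      have hmono : x ⟨i + 2, by omega⟩ < x ⟨i + 3, by omega⟩ := by nlinarith
      nlinarith [mul_nonneg (by linarith : (0:ℝ) ≤ μ - 3) hp3.le]
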